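/- The relation ∼_A on words, defined as the conjunction of equality of the four behavior relations (left-to-left, left-to-right, right-to-left, right-to-right) of a two-way automaton A, is a congruence on the free monoid A* (i.e., if u ∼_A u' and v ∼_A v' then uv ∼_A u'v'). -/

import Mathlib

/-- A two-way automaton: deterministic transition function giving next state
and a head move in `{-1, 0, +1}`. -/
structure TwoWay (Q A : Type) where
  δ : Q → A → Q × ℤ
  move : ∀ q a, (δ q a).2 = -1 ∨ (δ q a).2 = 0 ∨ (δ q a).2 = 1

/-- One step of the two-way automaton on word `w`; configurations are
(state, position), positions `1..|w|` carry letters, `0` is the left exit,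
`|w|+1` the right exit. -/
def TwoWay.step {Q A : Type} (M : TwoWay Q A) (w : List A) (c c' : Q × ℤ) : Prop :=
  1 ≤ c.2 ∧ ∃ a, w[(c.2 - 1).toNat]? = some a ∧
    c'.1 = (M.δ c.1 a).1 ∧ c'.2 = c.2 + (M.δ c.1 a).2

def TwoWay.reach {Q A : Type} (M : TwoWay Q A) (w : List A) : Q × ℤ → Q × ℤ → Prop :=
  Relation.ReflTransGen (M.step w)

/-- Left-to-left behavior: runs starting at the first position and leaving on the left. -/
def TwoWay.bhLL {Q A : Type} (M : TwoWay Q A) (w : List A) : Set (Q × Q) :=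
  {pq | M.reach w (pq.1, 1) (pq.2, 0)}

/-- Left-to-right behavior. -/
def TwoWay.bhLR {Q A : Type} (M : TwoWay Q A) (w : List A) : Set (Q × Q) :=
  {pq | M.reach w (pq.1, 1) (pq.2, (w.length : ℤ) + 1)}

/-- Right-to-left behavior. -/
def TwoWay.bhRL {Q A : Type} (M : TwoWay Q A) (w : List A) : Set (Q × Q) :=
  {pq | M.reach w (pq.1, (w.length : ℤ)) (pq.2, 0)}

/-- Right-to-right behavior. -/
def TwoWay.bhRR {Q A : Type} (M : TwoWay Q A) (w : List A) : Set (Q × Q) :=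
  {pq | M.reach w (pq.1, (w.length : ℤ)) (pq.2, (w.length : ℤ) + 1)}

/-- `u ∼_A v`: all four behaviors coincide. -/
def TwoWay.equiv {Q A : Type} (M : TwoWay Q A) (u v : List A) : Prop :=
  M.bhLL u = M.bhLL v ∧ M.bhLR u = M.bhLR v ∧ M.bhRL u = M.bhRL v ∧ M.bhRR u = M.bhRR v

-- auxiliary
inductive Site | s0 | s1 | sm | sm1 | smn | sout
deriving DecidableEq

def sitePos {A : Type} (u v : List A) : Site → ℤ
  | .s0 => 0
  | .s1 => 1
  | .sm => u.length
  | .sm1 => (u.length : ℤ) + 1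
  | .smn => (u.length : ℤ) + v.length
  | .sout => (u.length : ℤ) + v.length + 1

inductive AbsStep {Q A : Type} (M : TwoWay Q A) (u v : List A) : Q × Site → Q × Site → Prop
  | llu {p q} : (p, q) ∈ M.bhLL u → AbsStep M u v (p, .s1) (q, .s0)
  | lru {p q} : (p, q) ∈ M.bhLR u → AbsStep M u v (p, .s1) (q, .sm1)
  | rlu {p q} : (p, q) ∈ M.bhRL u → AbsStep M u v (p, .sm) (q, .s0)
  | rru {p q} : (p, q) ∈ M.bhRR u → AbsStep M u v (p, .sm) (q, .sm1)
  | llv {p q} : (p, q) ∈ M.bhLL v → AbsStep M u v (p, .sm1) (q, .sm)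
  | lrv {p q} : (p, q) ∈ M.bhLR v → AbsStep M u v (p, .sm1) (q, .sout)
  | rlv {p q} : (p, q) ∈ M.bhRL v → AbsStep M u v (p, .smn) (q, .sm)
  | rrv {p q} : (p, q) ∈ M.bhRR v → AbsStep M u v (p, .smn) (q, .sout)

def AbsReach {Q A : Type} (M : TwoWay Q A) (u v : List A) : Q × Site → Q × Site → Prop :=
  Relation.ReflTransGen (AbsStep M u v)

section Embed
variable {Q A : Type} (M : TwoWay Q A)

lemma step_left {u v : List A} {c c' : Q × ℤ} (h : M.step u c c') : M.step (u ++ v) c c' := by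
  obtain ⟨h1, a, ha, h2⟩ := h
  have hlt : (c.2 - 1).toNat < u.length := by
    by_contra hge
    rw [List.getElem?_eq_none (le_of_not_gt hge)] at ha
    exact Option.some_ne_none a ha.symm
  exact ⟨h1, a, by rw [List.getElem?_append_left hlt]; exact ha, h2⟩

lemma reach_left {u v : List A} {c c' : Q × ℤ} (h : M.reach u c c') : M.reach (u ++ v) c c' :=
  Relation.ReflTransGen.mono (r := M.step u) (p := M.step (u ++ v)) (fun _ _ h => step_left M h) _ _ h

lemma step_shift {u v : List A} {c c' : Q × ℤ} (h : M.step v c c') :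
    M.step (u ++ v) (c.1, c.2 + u.length) (c'.1, c'.2 + u.length) := by
  obtain ⟨h1, a, ha, h2, h3⟩ := h
  refine ⟨by simp; omega, a, ?_, h2, by simp; omega⟩
  have e : ((c.2 + (u.length : ℤ)) - 1).toNat = u.length + (c.2 - 1).toNat := by omega
  simp only [e]
  rw [List.getElem?_append_right (Nat.le_add_right _ _)]
  simpa using ha

lemma reach_shift {u v : List A} {c c' : Q × ℤ} (h : M.reach v c c') :
    M.reach (u ++ v) (c.1, c.2 + u.length) (c'.1, c'.2 + u.length) := by
  induction h with
  | refl => exact .refl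
  | tail _ hstep ih => exact ih.tail (step_shift M hstep)

lemma absStep_sound {u v : List A} {c c' : Q × Site} (h : AbsStep M u v c c') :
    M.reach (u ++ v) (c.1, sitePos u v c.2) (c'.1, sitePos u v c'.2) := by
  cases h with
  | llu h => exact reach_left M h
  | lru h => exact reach_left M h
  | rlu h => exact reach_left M h
  | rru h => exact reach_left M h
  | llv h => simpa [sitePos, add_comm] using reach_shift M (u := u) h
  | lrv h => simpa [sitePos, add_comm, add_assoc, add_left_comm] using reach_shift M (u := u) h
  | rlv h => simpa [sitePos, add_comm] using reach_shift M (u := u) h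
  | rrv h => simpa [sitePos, add_comm, add_assoc, add_left_comm] using reach_shift M (u := u) h

lemma absReach_sound {u v : List A} {c c' : Q × Site} (h : AbsReach M u v c c') :
    M.reach (u ++ v) (c.1, sitePos u v c.2) (c'.1, sitePos u v c'.2) := by
  induction h with
  | refl => exact .refl
  | tail _ hstep ih => exact ih.trans (absStep_sound M hstep)

end Embed

section Main
variable {Q A : Type} (M : TwoWay Q A)

lemma main_decomp (u v : List A) (t : Q) (e : Site)
    (he : e = Site.s0 ∨ e = Site.sout) :
    ∀ c : Q × ℤ, M.reach (u ++ v) c (t, sitePos u v e) →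
      ((1 ≤ c.2 ∧ c.2 ≤ (u.length : ℤ)) → ∃ q,
        (M.reach u c (q, 0) ∧ AbsReach M u v (q, Site.s0) (t, e)) ∨
        (M.reach u c (q, (u.length : ℤ) + 1) ∧ AbsReach M u v (q, Site.sm1) (t, e))) ∧
      (((u.length : ℤ) + 1 ≤ c.2 ∧ c.2 ≤ (u.length : ℤ) + (v.length : ℤ)) → ∃ q,
        (M.reach v (c.1, c.2 - (u.length : ℤ)) (q, 0) ∧ AbsReach M u v (q, Site.sm) (t, e)) ∨
        (M.reach v (c.1, c.2 - (u.length : ℤ)) (q, (v.length : ℤ) + 1) ∧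
          AbsReach M u v (q, Site.sout) (t, e))) ∧
      ((c.2 ≤ 0 ∨ (u.length : ℤ) + (v.length : ℤ) + 1 ≤ c.2) → c = (t, sitePos u v e)) := by
  intro c h
  induction h using Relation.ReflTransGen.head_induction_on with
  | refl =>
    refine ⟨?_, ?_, fun _ => rfl⟩
    · rintro ⟨h1, h2⟩
      exfalso
      rcases he with rfl | rfl <;> simp [sitePos] at h1 h2 <;> omega
    · rintro ⟨h1, h2⟩
      exfalso
      rcases he with rfl | rfl <;> simp [sitePos] at h1 h2 <;> omega
  | @head c c'' hstep hrest ih =>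
    obtain ⟨p, i⟩ := c
    obtain ⟨p2, i2⟩ := c''
    obtain ⟨h1, a, ha, hq, hp⟩ := hstep
    simp only at h1 ha hq hp
    have hd := M.move p a
    have hlen : (i - 1).toNat < (u ++ v).length := by
      by_contra hge
      rw [List.getElem?_eq_none (le_of_not_gt hge)] at ha
      exact Option.some_ne_none a ha.symm
    rw [List.length_append] at hlen
    have hub : i ≤ (u.length : ℤ) + (v.length : ℤ) := by omega
    refine ⟨?_, ?_, ?_⟩
    · -- i in the u-block
      rintro ⟨hc1, hc2⟩
      have ha' : u[(i - 1).toNat]? = some a := by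
        rw [← List.getElem?_append_left (l₂ := v) (by omega : (i - 1).toNat < u.length)]
        exact ha
      have step_u : M.step u (p, i) (p2, i2) := ⟨h1, a, ha', hq, hp⟩
      have hi2 : 0 ≤ i2 ∧ i2 ≤ (u.length : ℤ) + 1 := by omega
      rcases lt_or_ge i2 1 with hz | hz
      · -- i2 = 0 : exited left
        have hi2z : i2 = 0 := by omega
        have heq := (ih.2.2) (Or.inl (by omega))
        have h2 := congrArg Prod.snd heq
        have h1' := congrArg Prod.fst heq
        simp only at h2 h1'
        have he0 : e = Site.s0 := by
          rcases he with rfl | rfl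
          · rfl
          · exfalso; simp [sitePos] at h2; omega
        subst he0
        refine ⟨p2, Or.inl ⟨?_, ?_⟩⟩
        · have : (p2, (0:ℤ)) = (p2, i2) := by rw [hi2z]
          rw [this]; exact Relation.ReflTransGen.single step_u
        · rw [← h1']; exact Relation.ReflTransGen.refl
      rcases lt_or_ge i2 ((u.length : ℤ) + 1) with hm | hm
      · -- i2 still in u block
        obtain ⟨q, hcase⟩ := ih.1 ⟨by omega, by omega⟩
        refine ⟨q, ?_⟩
        rcases hcase with ⟨hr, habs⟩ | ⟨hr, habs⟩
        · exact Or.inl ⟨hr.head step_u, habs⟩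
        · exact Or.inr ⟨hr.head step_u, habs⟩
      · -- i2 = u.length + 1 : crossed to v block (or exited if v = [])
        have hi2m : i2 = (u.length : ℤ) + 1 := by omega
        have hreachu : M.reach u (p, i) (p2, (u.length : ℤ) + 1) := by
          have : ((p2 : Q), (u.length : ℤ) + 1) = (p2, i2) := by rw [hi2m]
          rw [this]; exact Relation.ReflTransGen.single step_u
        rcases Nat.eq_zero_or_pos v.length with hv0 | hvpos
        · -- v empty : i2 is the right exit
          have heq := (ih.2.2) (Or.inr (by omega))
          have h2 := congrArg Prod.snd heq
          have h1' := congrArg Prod.fst heq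
          simp only at h2 h1'
          have he1 : e = Site.sout := by
            rcases he with rfl | rfl
            · exfalso; simp [sitePos] at h2; omega
            · rfl
          subst he1
          refine ⟨p2, Or.inr ⟨hreachu, ?_⟩⟩
          refine Relation.ReflTransGen.single (AbsStep.lrv ?_)
          show M.reach v (p2, 1) (t, (v.length : ℤ) + 1)
          rw [← h1', hv0]
          norm_num
          exact Relation.ReflTransGen.refl
        · obtain ⟨q, hcase⟩ := ih.2.1 ⟨by omega, by omega⟩
          have hsub : i2 - (u.length : ℤ) = 1 := by omega
          rw [hsub] at hcase
          refine ⟨p2, Or.inr ⟨hreachu, ?_⟩⟩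
          rcases hcase with ⟨hr, habs⟩ | ⟨hr, habs⟩
          · exact Relation.ReflTransGen.head (AbsStep.llv hr) habs
          · exact Relation.ReflTransGen.head (AbsStep.lrv hr) habs
    · -- i in the v-block
      rintro ⟨hc1, hc2⟩
      have ha' : v[((i - (u.length : ℤ)) - 1).toNat]? = some a := by
        have h' : u.length ≤ (i - 1).toNat := by omega
        rw [List.getElem?_append_right h'] at ha
        have : (i - 1).toNat - u.length = ((i - (u.length : ℤ)) - 1).toNat := by omega
        rw [← this]; exact ha
      have step_v : M.step v (p, i - (u.length : ℤ)) (p2, i2 - (u.length : ℤ)) :=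
        ⟨by simp; omega, a, ha', hq, by simp; omega⟩
      rcases lt_or_ge i2 ((u.length : ℤ) + 1) with hz | hz
      · -- i2 = u.length : crossed back to u block (or exited left if u = [])
        have hi2m : i2 = (u.length : ℤ) := by omega
        have hreachv : M.reach v (p, i - (u.length : ℤ)) (p2, 0) := by
          have : ((p2 : Q), (0 : ℤ)) = (p2, i2 - (u.length : ℤ)) := by rw [hi2m]; norm_num
          rw [this]; exact Relation.ReflTransGen.single step_v
        rcases Nat.eq_zero_or_pos u.length with hu0 | hupos
        · have heq := (ih.2.2) (Or.inl (by omega))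
          have h2 := congrArg Prod.snd heq
          have h1' := congrArg Prod.fst heq
          simp only at h2 h1'
          have he0 : e = Site.s0 := by
            rcases he with rfl | rfl
            · rfl
            · exfalso; simp [sitePos] at h2; omega
          subst he0
          refine ⟨p2, Or.inl ⟨hreachv, ?_⟩⟩
          refine Relation.ReflTransGen.single (AbsStep.rlu ?_)
          show M.reach u (p2, (u.length : ℤ)) (t, 0)
          rw [← h1', hu0]
          norm_num
          exact Relation.ReflTransGen.refl
        · obtain ⟨q, hcase⟩ := ih.1 ⟨by omega, by omega⟩
          refine ⟨p2, Or.inl ⟨hreachv, ?_⟩⟩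
          rcases hcase with ⟨hr, habs⟩ | ⟨hr, habs⟩
          · refine Relation.ReflTransGen.head (AbsStep.rlu ?_) habs
            show M.reach u (p2, (u.length : ℤ)) (q, 0)
            rw [hi2m] at hr; exact hr
          · refine Relation.ReflTransGen.head (AbsStep.rru ?_) habs
            show M.reach u (p2, (u.length : ℤ)) (q, (u.length : ℤ) + 1)
            rw [hi2m] at hr; exact hr
      rcases lt_or_ge i2 ((u.length : ℤ) + (v.length : ℤ) + 1) with hm | hm
      · -- i2 still in the v block
        obtain ⟨q, hcase⟩ := ih.2.1 ⟨by omega, by omega⟩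
        refine ⟨q, ?_⟩
        rcases hcase with ⟨hr, habs⟩ | ⟨hr, habs⟩
        · exact Or.inl ⟨hr.head step_v, habs⟩
        · exact Or.inr ⟨hr.head step_v, habs⟩
      · -- i2 = u.length + v.length + 1 : exited right
        have hi2m : i2 = (u.length : ℤ) + (v.length : ℤ) + 1 := by omega
        have heq := (ih.2.2) (Or.inr (by omega))
        have h2 := congrArg Prod.snd heq
        have h1' := congrArg Prod.fst heq
        simp only at h2 h1'
        have he1 : e = Site.sout := by
          rcases he with rfl | rfl
          · exfalso; simp [sitePos] at h2; omega
          · rfl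
        subst he1
        refine ⟨p2, Or.inr ⟨?_, by rw [← h1']; exact Relation.ReflTransGen.refl⟩⟩
        have : ((p2 : Q), (v.length : ℤ) + 1) = (p2, i2 - (u.length : ℤ)) := by
          rw [hi2m]; congr 1; ring
        rw [this]; exact Relation.ReflTransGen.single step_v
    · intro hout
      exfalso; omega

end Main

section Char
variable {Q A : Type} (M : TwoWay Q A)

lemma len_app (u v : List A) : ((u ++ v).length : ℤ) = (u.length : ℤ) + (v.length : ℤ) := by
  simp

lemma bhLL_char (u v : List A) (p q : Q) :
    (p, q) ∈ M.bhLL (u ++ v) ↔ AbsReach M u v (p, Site.s1) (q, Site.s0) := by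
  constructor
  · intro h
    have H := main_decomp M u v q Site.s0 (Or.inl rfl) (p, 1) h
    dsimp only at H
    rcases Nat.eq_zero_or_pos u.length with hu0 | hupos
    · have edge1 : AbsStep M u v (p, Site.s1) (p, Site.sm1) := by
        refine AbsStep.lru ?_
        show M.reach u (p, 1) (p, (u.length : ℤ) + 1)
        rw [hu0]; norm_num; exact Relation.ReflTransGen.refl
      rcases Nat.eq_zero_or_pos v.length with hv0 | hvpos
      · have heq := H.2.2 (Or.inr (by omega))
        have h2 := congrArg Prod.snd heq
        simp [sitePos] at h2
      · obtain ⟨q₀, hc⟩ := H.2.1 ⟨by omega, by omega⟩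
        rw [show (1 : ℤ) - (u.length : ℤ) = 1 by omega] at hc
        rcases hc with ⟨hr, habs⟩ | ⟨hr, habs⟩
        · exact Relation.ReflTransGen.head edge1 (Relation.ReflTransGen.head (AbsStep.llv hr) habs)
        · exact Relation.ReflTransGen.head edge1 (Relation.ReflTransGen.head (AbsStep.lrv hr) habs)
    · obtain ⟨q₀, hc⟩ := H.1 ⟨le_refl 1, by omega⟩
      rcases hc with ⟨hr, habs⟩ | ⟨hr, habs⟩
      · exact Relation.ReflTransGen.head (AbsStep.llu hr) habs
      · exact Relation.ReflTransGen.head (AbsStep.lru hr) habs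
  · intro h
    have := absReach_sound M h
    simpa [sitePos, TwoWay.bhLL] using this

lemma bhLR_char (u v : List A) (p q : Q) :
    (p, q) ∈ M.bhLR (u ++ v) ↔ AbsReach M u v (p, Site.s1) (q, Site.sout) := by
  constructor
  · intro h
    have h' : M.reach (u ++ v) (p, 1) (q, sitePos u v Site.sout) := by
      have := len_app u v
      show M.reach (u ++ v) (p, 1) (q, (u.length : ℤ) + (v.length : ℤ) + 1)
      rw [← this]; exact h
    have H := main_decomp M u v q Site.sout (Or.inr rfl) (p, 1) h'
    dsimp only at H
    rcases Nat.eq_zero_or_pos u.length with hu0 | hupos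
    · have edge1 : AbsStep M u v (p, Site.s1) (p, Site.sm1) := by
        refine AbsStep.lru ?_
        show M.reach u (p, 1) (p, (u.length : ℤ) + 1)
        rw [hu0]; norm_num; exact Relation.ReflTransGen.refl
      rcases Nat.eq_zero_or_pos v.length with hv0 | hvpos
      · have heq := H.2.2 (Or.inr (by omega))
        have h2 := congrArg Prod.fst heq
        simp only at h2
        subst h2
        refine Relation.ReflTransGen.head edge1 (Relation.ReflTransGen.single (AbsStep.lrv ?_))
        show M.reach v (p, 1) (p, (v.length : ℤ) + 1)
        rw [hv0]; norm_num; exact Relation.ReflTransGen.refl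
      · obtain ⟨q₀, hc⟩ := H.2.1 ⟨by omega, by omega⟩
        rw [show (1 : ℤ) - (u.length : ℤ) = 1 by omega] at hc
        rcases hc with ⟨hr, habs⟩ | ⟨hr, habs⟩
        · exact Relation.ReflTransGen.head edge1 (Relation.ReflTransGen.head (AbsStep.llv hr) habs)
        · exact Relation.ReflTransGen.head edge1 (Relation.ReflTransGen.head (AbsStep.lrv hr) habs)
    · obtain ⟨q₀, hc⟩ := H.1 ⟨le_refl 1, by omega⟩
      rcases hc with ⟨hr, habs⟩ | ⟨hr, habs⟩
      · exact Relation.ReflTransGen.head (AbsStep.llu hr) habs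
      · exact Relation.ReflTransGen.head (AbsStep.lru hr) habs
  · intro h
    have := absReach_sound M h
    simp [sitePos] at this
    show M.reach (u ++ v) (p, 1) (q, ((u ++ v).length : ℤ) + 1)
    rw [len_app]; exact this

lemma bhRL_char (u v : List A) (p q : Q) :
    (p, q) ∈ M.bhRL (u ++ v) ↔ AbsReach M u v (p, Site.smn) (q, Site.s0) := by
  constructor
  · intro h
    have h' : M.reach (u ++ v) (p, (u.length : ℤ) + (v.length : ℤ)) (q, sitePos u v Site.s0) := by
      have := len_app u v
      rw [← this]; exact h
    have H := main_decomp M u v q Site.s0 (Or.inl rfl) (p, (u.length : ℤ) + (v.length : ℤ)) h'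
    dsimp only at H
    rcases Nat.eq_zero_or_pos v.length with hv0 | hvpos
    · have edge1 : AbsStep M u v (p, Site.smn) (p, Site.sm) := by
        refine AbsStep.rlv ?_
        show M.reach v (p, (v.length : ℤ)) (p, 0)
        rw [hv0]; norm_num; exact Relation.ReflTransGen.refl
      rcases Nat.eq_zero_or_pos u.length with hu0 | hupos
      · have heq := H.2.2 (Or.inl (by omega))
        have h2 := congrArg Prod.fst heq
        simp only at h2
        subst h2
        refine Relation.ReflTransGen.head edge1 (Relation.ReflTransGen.single (AbsStep.rlu ?_))
        show M.reach u (p, (u.length : ℤ)) (p, 0)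
        rw [hu0]; norm_num; exact Relation.ReflTransGen.refl
      · have hmn : (u.length : ℤ) + (v.length : ℤ) = (u.length : ℤ) := by omega
        rw [hmn] at H
        obtain ⟨q₀, hc⟩ := H.1 ⟨by omega, le_refl _⟩
        rcases hc with ⟨hr, habs⟩ | ⟨hr, habs⟩
        · exact Relation.ReflTransGen.head edge1 (Relation.ReflTransGen.head (AbsStep.rlu hr) habs)
        · exact Relation.ReflTransGen.head edge1 (Relation.ReflTransGen.head (AbsStep.rru hr) habs)
    · obtain ⟨q₀, hc⟩ := H.2.1 ⟨by omega, le_refl _⟩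
      rw [show (u.length : ℤ) + (v.length : ℤ) - (u.length : ℤ) = (v.length : ℤ) by ring] at hc
      rcases hc with ⟨hr, habs⟩ | ⟨hr, habs⟩
      · exact Relation.ReflTransGen.head (AbsStep.rlv hr) habs
      · exact Relation.ReflTransGen.head (AbsStep.rrv hr) habs
  · intro h
    have := absReach_sound M h
    simp [sitePos] at this
    show M.reach (u ++ v) (p, ((u ++ v).length : ℤ)) (q, 0)
    rw [len_app]; exact this

lemma bhRR_char (u v : List A) (p q : Q) :
    (p, q) ∈ M.bhRR (u ++ v) ↔ AbsReach M u v (p, Site.smn) (q, Site.sout) := by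
  constructor
  · intro h
    have h' : M.reach (u ++ v) (p, (u.length : ℤ) + (v.length : ℤ)) (q, sitePos u v Site.sout) := by
      have := len_app u v
      show M.reach (u ++ v) (p, (u.length : ℤ) + (v.length : ℤ))
        (q, (u.length : ℤ) + (v.length : ℤ) + 1)
      rw [← this]; exact h
    have H := main_decomp M u v q Site.sout (Or.inr rfl) (p, (u.length : ℤ) + (v.length : ℤ)) h'
    dsimp only at H
    rcases Nat.eq_zero_or_pos v.length with hv0 | hvpos
    · have edge1 : AbsStep M u v (p, Site.smn) (p, Site.sm) := by
        refine AbsStep.rlv ?_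
        show M.reach v (p, (v.length : ℤ)) (p, 0)
        rw [hv0]; norm_num; exact Relation.ReflTransGen.refl
      rcases Nat.eq_zero_or_pos u.length with hu0 | hupos
      · have heq := H.2.2 (Or.inl (by omega))
        have h2 := congrArg Prod.snd heq
        simp [sitePos] at h2
      · have hmn : (u.length : ℤ) + (v.length : ℤ) = (u.length : ℤ) := by omega
        rw [hmn] at H
        obtain ⟨q₀, hc⟩ := H.1 ⟨by omega, le_refl _⟩
        rcases hc with ⟨hr, habs⟩ | ⟨hr, habs⟩
        · exact Relation.ReflTransGen.head edge1 (Relation.ReflTransGen.head (AbsStep.rlu hr) habs)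
        · exact Relation.ReflTransGen.head edge1 (Relation.ReflTransGen.head (AbsStep.rru hr) habs)
    · obtain ⟨q₀, hc⟩ := H.2.1 ⟨by omega, le_refl _⟩
      rw [show (u.length : ℤ) + (v.length : ℤ) - (u.length : ℤ) = (v.length : ℤ) by ring] at hc
      rcases hc with ⟨hr, habs⟩ | ⟨hr, habs⟩
      · exact Relation.ReflTransGen.head (AbsStep.rlv hr) habs
      · exact Relation.ReflTransGen.head (AbsStep.rrv hr) habs
  · intro h
    have := absReach_sound M h
    simp [sitePos] at this
    show M.reach (u ++ v) (p, ((u ++ v).length : ℤ)) (q, ((u ++ v).length : ℤ) + 1)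
    rw [len_app]; exact this

end Char

section Final
variable {Q A : Type} (M : TwoWay Q A)

lemma absStep_mono {u u' v v' : List A} (hu : M.equiv u u') (hv : M.equiv v v')
    {c c' : Q × Site} (h : AbsStep M u v c c') : AbsStep M u' v' c c' := by
  obtain ⟨e1, e2, e3, e4⟩ := hu
  obtain ⟨f1, f2, f3, f4⟩ := hv
  cases h with
  | llu h => exact .llu (e1 ▸ h)
  | lru h => exact .lru (e2 ▸ h)
  | rlu h => exact .rlu (e3 ▸ h)
  | rru h => exact .rru (e4 ▸ h)
  | llv h => exact .llv (f1 ▸ h)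
  | lrv h => exact .lrv (f2 ▸ h)
  | rlv h => exact .rlv (f3 ▸ h)
  | rrv h => exact .rrv (f4 ▸ h)

lemma equiv_symm {u u' : List A} (hu : M.equiv u u') : M.equiv u' u :=
  ⟨hu.1.symm, hu.2.1.symm, hu.2.2.1.symm, hu.2.2.2.symm⟩

lemma absReach_iff {u u' v v' : List A} (hu : M.equiv u u') (hv : M.equiv v v')
    (c c' : Q × Site) : AbsReach M u v c c' ↔ AbsReach M u' v' c c' :=
  ⟨Relation.ReflTransGen.mono (r := AbsStep M u v) (p := AbsStep M u' v') (fun _ _ h => absStep_mono M hu hv h) _ _,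
   Relation.ReflTransGen.mono (r := AbsStep M u' v') (p := AbsStep M u v) (fun _ _ h => absStep_mono M (equiv_symm M hu) (equiv_symm M hv) h) _ _⟩


/-- The relation `∼_A` is a congruence on the free monoid `A*`. -/
theorem stmt_0 {Q A : Type} (M : TwoWay Q A) (u u' v v' : List A)
    (hu : M.equiv u u') (hv : M.equiv v v') : M.equiv (u ++ v) (u' ++ v') := by
  refine ⟨?_, ?_, ?_, ?_⟩ <;> ext ⟨p, q⟩
  · rw [bhLL_char, bhLL_char, absReach_iff M hu hv]
  · rw [bhLR_char, bhLR_char, absReach_iff M hu hv]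
  · rw [bhRL_char, bhRL_char, absReach_iff M hu hv]
  · rw [bhRR_char, bhRR_char, absReach_iff M hu hv]

end Final
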